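/- Finite-time bound from the generating function hierarchy: Under the assumptions of the generating-function ODE lemma with c1 > c2 > 0 and M2 > 0, set T_* = (1 − c2/c1)/M2. Then for every t < min(T_*, T) and every k ∈ [N], x^k(t) ≤ (c1/c2)^k · ( C0 / (1 − M2 t − c2/c1)^3 + M3 / (M2 (1 − M2 t − c2/c1)^2) ) · 1/N^2. -/

import Mathlib

open Finset

private lemma geom_partial (r : ℝ) (h0 : 0 ≤ r) (h1 : r < 1) (n : ℕ) :
    ∑ i ∈ Finset.range n, r ^ i ≤ (1 - r)⁻¹ := by
  have hr1 : r ≠ 1 := ne_of_lt h1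
  have hpos : 0 < 1 - r := by linarith
  rw [geom_sum_eq hr1]
  have h : (r ^ n - 1) / (r - 1) = (1 - r ^ n) / (1 - r) := by
    rw [div_eq_div_iff (by linarith) (by linarith)]; ring
  rw [h, ← one_div]
  have hn : 0 ≤ r ^ n := pow_nonneg h0 n
  gcongr
  linarith

private lemma geom_tail (r : ℝ) (h0 : 0 ≤ r) (h1 : r < 1) (j N : ℕ) :
    ∑ k ∈ Finset.Icc j N, r ^ k ≤ r ^ j * (1 - r)⁻¹ := by
  rw [← Finset.Ico_add_one_right_eq_Icc, Finset.sum_Ico_eq_sum_range]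
  simp_rw [pow_add, ← Finset.mul_sum]
  exact mul_le_mul_of_nonneg_left (geom_partial r h0 h1 _) (pow_nonneg h0 j)

private lemma sum_weight (N : ℕ) (r : ℝ) (h0 : 0 ≤ r) (h1 : r < 1) (f : ℕ → ℝ)
    (hf : ∀ k, 0 ≤ f k) :
    ∑ k ∈ Finset.Icc 1 N, (∑ j ∈ Finset.Icc 1 k, f j) * r ^ k
      ≤ (∑ j ∈ Finset.Icc 1 N, f j * r ^ j) * (1 - r)⁻¹ := by
  calc ∑ k ∈ Finset.Icc 1 N, (∑ j ∈ Finset.Icc 1 k, f j) * r ^ k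
      = ∑ k ∈ Finset.Icc 1 N, ∑ j ∈ Finset.Icc 1 k, f j * r ^ k := by
        simp_rw [Finset.sum_mul]
    _ = ∑ j ∈ Finset.Icc 1 N, ∑ k ∈ Finset.Icc j N, f j * r ^ k := by
        apply Finset.sum_comm'
        intro k j; simp only [Finset.mem_Icc]; omega
    _ = ∑ j ∈ Finset.Icc 1 N, f j * ∑ k ∈ Finset.Icc j N, r ^ k := by
        simp_rw [Finset.mul_sum]
    _ ≤ ∑ j ∈ Finset.Icc 1 N, f j * (r ^ j * (1 - r)⁻¹) := by
        refine Finset.sum_le_sum fun j _ => ?_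
        exact mul_le_mul_of_nonneg_left (geom_tail r h0 h1 j N) (hf j)
    _ = (∑ j ∈ Finset.Icc 1 N, f j * r ^ j) * (1 - r)⁻¹ := by
        rw [Finset.sum_mul]; simp_rw [mul_assoc]

private lemma gauss_Icc (k : ℕ) : ∑ j ∈ Finset.Icc 1 k, (j : ℝ) = k * (k + 1) / 2 := by
  induction k with
  | zero => simp
  | succ n ih =>
      rw [Finset.sum_Icc_succ_top (by omega), ih]
      push_cast; ring

private lemma card_Icc_one (k : ℕ) : ∑ j ∈ Finset.Icc 1 k, (1 : ℝ) = k := by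
  simp [Nat.card_Icc]

private lemma sq_geom_bound (N : ℕ) (r : ℝ) (h0 : 0 ≤ r) (h1 : r < 1) :
    ∑ k ∈ Finset.Icc 1 N, (k : ℝ) ^ 2 * r ^ k ≤ 2 * ((1 - r)⁻¹) ^ 3 := by
  have hinv : (0:ℝ) ≤ (1 - r)⁻¹ := inv_nonneg.2 (by linarith)
  have hg : ∑ j ∈ Finset.Icc 1 N, r ^ j ≤ (1 - r)⁻¹ := by
    refine (geom_tail r h0 h1 1 N).trans ?_
    rw [pow_one]
    calc r * (1 - r)⁻¹ ≤ 1 * (1 - r)⁻¹ := mul_le_mul_of_nonneg_right h1.le hinv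
      _ = (1 - r)⁻¹ := one_mul _
  have S1 : ∑ j ∈ Finset.Icc 1 N, (j : ℝ) * r ^ j ≤ (1 - r)⁻¹ * (1 - r)⁻¹ := by
    have h := sum_weight N r h0 h1 (fun _ => (1:ℝ)) (fun _ => zero_le_one)
    simp only [card_Icc_one, one_mul] at h
    exact h.trans (mul_le_mul_of_nonneg_right hg hinv)
  have S2 := sum_weight N r h0 h1 (fun j => (j:ℝ)) (fun j => Nat.cast_nonneg j)
  calc ∑ k ∈ Finset.Icc 1 N, (k : ℝ) ^ 2 * r ^ k
      ≤ ∑ k ∈ Finset.Icc 1 N, 2 * ((∑ j ∈ Finset.Icc 1 k, (j:ℝ)) * r ^ k) := by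
        refine Finset.sum_le_sum fun k _ => ?_
        rw [gauss_Icc]
        have hk : (0:ℝ) ≤ (k:ℝ) := Nat.cast_nonneg k
        have hrk : (0:ℝ) ≤ r ^ k := pow_nonneg h0 k
        nlinarith
    _ = 2 * ∑ k ∈ Finset.Icc 1 N, (∑ j ∈ Finset.Icc 1 k, (j:ℝ)) * r ^ k := by
        rw [Finset.mul_sum]
    _ ≤ 2 * ((∑ j ∈ Finset.Icc 1 N, (j:ℝ) * r ^ j) * (1 - r)⁻¹) :=
        mul_le_mul_of_nonneg_left S2 (by norm_num)
    _ ≤ 2 * (((1 - r)⁻¹ * (1 - r)⁻¹) * (1 - r)⁻¹) :=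
        mul_le_mul_of_nonneg_left (mul_le_mul_of_nonneg_right S1 hinv) (by norm_num)
    _ = 2 * ((1 - r)⁻¹) ^ 3 := by ring

private lemma shift_sum (N : ℕ) (w : ℕ → ℝ) :
    ∑ k ∈ Finset.Icc 1 N, (if k < N then w (k + 1) else 0)
      = ∑ k ∈ Finset.Icc 2 N, w k := by
  rw [← Finset.sum_filter]
  have h1 : (Finset.Icc 1 N).filter (· < N) = Finset.Ico 1 N := by
    ext j; simp only [Finset.mem_filter, Finset.mem_Icc, Finset.mem_Ico]; omega
  rw [h1, ← Finset.Ico_add_one_right_eq_Icc, Finset.sum_Ico_eq_sum_range, Finset.sum_Ico_eq_sum_range]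
  have h2 : N - 1 = N + 1 - 2 := by omega
  rw [h2]
  exact Finset.sum_congr rfl fun i _ => by congr 1; omega

private lemma deriv_mono {t : ℝ} (ht : 0 ≤ t) {H H' : ℝ → ℝ}
    (hd : ∀ s ∈ Set.Icc (0:ℝ) t, HasDerivAt H (H' s) s)
    (hle : ∀ s ∈ Set.Icc (0:ℝ) t, H' s ≤ 0) : H t ≤ H 0 := by
  rcases eq_or_lt_of_le ht with rfl | ht'
  · exact le_refl _
  · have hanti : AntitoneOn H (Set.Icc 0 t) := by
      apply antitoneOn_of_deriv_nonpos (convex_Icc 0 t)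
      · exact fun s hs => (hd s hs).continuousAt.continuousWithinAt
      · intro s hs
        rw [interior_Icc] at hs
        exact ((hd s (Set.mem_Icc_of_Ioo hs)).differentiableAt).differentiableWithinAt
      · intro s hs
        rw [interior_Icc] at hs
        rw [(hd s (Set.mem_Icc_of_Ioo hs)).deriv]
        exact hle s (Set.mem_Icc_of_Ioo hs)
    exact hanti (Set.left_mem_Icc.2 ht) (Set.right_mem_Icc.2 ht) ht

private lemma heq_aux (M2 M3 Nr b : ℝ) (hM2 : M2 ≠ 0) (hN : Nr ≠ 0) (hb : b ≠ 0) :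
    M3 / (M2 * Nr ^ 2) * (-((2:ℝ) * b ^ 1 * M2) / ((b ^ 2) ^ 2))
      = -(2 * M3 / Nr ^ 2 * (b⁻¹) ^ 3) := by
  field_simp

private lemma final_aux (c C0 M2 M3 Nr a : ℝ) (hM2 : M2 ≠ 0) (hN : Nr ≠ 0) (ha : a ≠ 0) :
    c * (C0 / (Nr ^ 2 * a ^ 3) + M3 / (M2 * Nr ^ 2) * (a ^ 2)⁻¹)
      = c * (C0 / a ^ 3 + M3 / (M2 * a ^ 2)) / Nr ^ 2 := by
  field_simp

set_option maxHeartbeats 1000000 in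
/-- Finite-time bound from the generating function hierarchy: with
`T_* = (1 - c2/c1)/M2`, for `t < min(T_*, T)` and `k ∈ [N]`,
`x^k(t) ≤ (c1/c2)^k (C0/(1 - M2 t - c2/c1)^3 + M3/(M2 (1 - M2 t - c2/c1)^2))/N²`. -/
theorem generating_function_finite_time_bound
    (N : ℕ) (hN : 1 ≤ N) (T : ℝ) (hT : 0 < T)
    (c1 c2 M2 M3 C0 : ℝ) (hc : c1 > c2) (hc2 : c2 > 0)
    (hM2 : 0 < M2) (hM3 : 0 ≤ M3) (hC0 : 0 ≤ C0)
    (x y x' : ℕ → ℝ → ℝ)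
    (hx0 : ∀ k ∈ Finset.Icc 1 N, ∀ t ∈ Set.Icc (0 : ℝ) T, 0 ≤ x k t)
    (hy0 : ∀ k ∈ Finset.Icc 1 N, ∀ t ∈ Set.Icc (0 : ℝ) T, 0 ≤ y k t)
    (hderiv : ∀ k ∈ Finset.Icc 1 N, ∀ t ∈ Set.Icc (0 : ℝ) T,
      HasDerivAt (fun s => x k s) (x' k t) t)
    (hcont : ∀ k ∈ Finset.Icc 1 N, ContinuousOn (fun t => x' k t) (Set.Icc (0 : ℝ) T))
    (hinit : ∀ r : ℝ, r ∈ Set.Ico (0 : ℝ) 1 →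
      ∑ k ∈ Finset.Icc 1 N, r ^ k * x k 0 ≤ C0 / ((N : ℝ) ^ 2 * (1 - r) ^ 3))
    (hineq : ∀ t ∈ Set.Icc (0 : ℝ) T, ∀ k ∈ Finset.Icc 1 N,
      x' k t ≤ -c1 * y k t + (if k < N then c2 * y (k + 1) t else 0)
        + (if k < N then M2 * k * x (k + 1) t else 0)
        + M3 * (k : ℝ) ^ 2 / (N : ℝ) ^ 2) :
    ∀ t : ℝ, 0 ≤ t → t < min ((1 - c2 / c1) / M2) T → ∀ k ∈ Finset.Icc 1 N,
      x k t ≤ (c1 / c2) ^ k *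
        (C0 / (1 - M2 * t - c2 / c1) ^ 3
          + M3 / (M2 * (1 - M2 * t - c2 / c1) ^ 2)) / (N : ℝ) ^ 2 := by
  intro t ht0 htlt k hk
  have hc1 : (0:ℝ) < c1 := hc2.trans hc
  have htT : t < T := htlt.trans_le (min_le_right _ _)
  have hts : t < (1 - c2 / c1) / M2 := htlt.trans_le (min_le_left _ _)
  set q : ℝ := c2 / c1 with hqdef
  have hq0 : 0 < q := div_pos hc2 hc1
  have hq1 : q < 1 := (div_lt_one hc1).2 hc
  have haux : M2 * t < 1 - q := by
    have h := (lt_div_iff₀ hM2).1 hts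
    linarith [mul_comm M2 t]
  set a : ℝ := 1 - q - M2 * t with hadef
  have ha : 0 < a := by rw [hadef]; linarith
  have hN0 : (0:ℝ) < (N:ℝ) := by exact_mod_cast Nat.lt_of_lt_of_le Nat.zero_lt_one hN
  have hN2 : (0:ℝ) < (N:ℝ)^2 := pow_pos hN0 2
  set ρ : ℝ → ℝ := fun s => q + M2 * (t - s) with hρdef
  have hone_sub : ∀ s : ℝ, 1 - ρ s = a + M2 * s := by
    intro s; rw [hρdef, hadef]; ring
  have hb_pos : ∀ s ∈ Set.Icc (0:ℝ) t, 0 < a + M2 * s := by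
    intro s hs; nlinarith [hs.1]
  have hρ_lb : ∀ s ∈ Set.Icc (0:ℝ) t, q ≤ ρ s := by
    intro s hs
    show q ≤ q + M2 * (t - s)
    nlinarith [hs.2]
  have hρ_nonneg : ∀ s ∈ Set.Icc (0:ℝ) t, 0 ≤ ρ s :=
    fun s hs => hq0.le.trans (hρ_lb s hs)
  have hρ_lt1 : ∀ s ∈ Set.Icc (0:ℝ) t, ρ s < 1 := by
    intro s hs
    have h1 := hb_pos s hs
    have h2 := hone_sub s
    linarith
  have hsub : Set.Icc (0:ℝ) t ⊆ Set.Icc (0:ℝ) T := Set.Icc_subset_Icc le_rfl htT.le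
  set G : ℝ → ℝ := fun s => ∑ j ∈ Finset.Icc 1 N, (ρ s) ^ j * x j s with hGdef
  set G' : ℝ → ℝ := fun s => ∑ j ∈ Finset.Icc 1 N,
    ((j : ℝ) * (ρ s) ^ (j - 1) * (-M2) * x j s + (ρ s) ^ j * x' j s) with hG'def
  -- derivative of G
  have hGd : ∀ s ∈ Set.Icc (0:ℝ) t, HasDerivAt G (G' s) s := by
    intro s hs
    apply HasDerivAt.fun_sum
    intro j hj
    have hρd : HasDerivAt ρ (-M2) s := by
      have h1 : HasDerivAt (fun u : ℝ => t - u) (-1 : ℝ) s := by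
        simpa using (hasDerivAt_id s).const_sub t
      have h2 := (h1.const_mul M2).const_add q
      exact h2.congr_deriv (by ring)
    have hpow := hρd.pow j
    exact hpow.mul (hderiv j hj s (hsub hs))
  -- key differential inequality
  have key : ∀ s ∈ Set.Icc (0:ℝ) t,
      G' s ≤ 2 * M3 / (N:ℝ)^2 * ((a + M2 * s)⁻¹) ^ 3 := by
    intro s hs
    have hsT := hsub hs
    have hρ0 : 0 ≤ ρ s := hρ_nonneg s hs
    have hρ1 : ρ s < 1 := hρ_lt1 s hs
    set w : ℕ → ℝ := fun j => (ρ s) ^ (j - 1) *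
      (c2 * y j s + M2 * ((j:ℝ) - 1) * x j s) with hwdef
    have step1 : G' s ≤ ∑ j ∈ Finset.Icc 1 N,
        (((j : ℝ) * (ρ s) ^ (j - 1) * (-M2) * x j s + (ρ s) ^ j * (-c1 * y j s))
          + (if j < N then w (j + 1) else 0)
          + (ρ s) ^ j * (M3 * (j:ℝ)^2 / (N:ℝ)^2)) := by
      rw [hG'def]
      refine Finset.sum_le_sum fun j hj => ?_
      have h := hineq s hsT j hj
      have hpj : (0:ℝ) ≤ (ρ s) ^ j := pow_nonneg hρ0 j
      have h2 : (ρ s) ^ j * x' j s ≤ (ρ s) ^ j *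
          (-c1 * y j s + (if j < N then c2 * y (j + 1) s else 0)
            + (if j < N then M2 * j * x (j + 1) s else 0)
            + M3 * (j:ℝ)^2 / (N:ℝ)^2) :=
        mul_le_mul_of_nonneg_left h hpj
      have h3 : (ρ s) ^ j * (-c1 * y j s + (if j < N then c2 * y (j + 1) s else 0)
            + (if j < N then M2 * j * x (j + 1) s else 0)
            + M3 * (j:ℝ)^2 / (N:ℝ)^2)
          = (ρ s) ^ j * (-c1 * y j s) + (if j < N then w (j + 1) else 0)
            + (ρ s) ^ j * (M3 * (j:ℝ)^2 / (N:ℝ)^2) := by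
        rw [hwdef]
        split_ifs with hjN
        · simp only [Nat.add_sub_cancel]
          push_cast
          ring
        · ring
      linarith
    have step2 : ∑ j ∈ Finset.Icc 1 N,
        (((j : ℝ) * (ρ s) ^ (j - 1) * (-M2) * x j s + (ρ s) ^ j * (-c1 * y j s))
          + (if j < N then w (j + 1) else 0)
          + (ρ s) ^ j * (M3 * (j:ℝ)^2 / (N:ℝ)^2))
        = (∑ j ∈ Finset.Icc 1 N,
            ((j : ℝ) * (ρ s) ^ (j - 1) * (-M2) * x j s + (ρ s) ^ j * (-c1 * y j s)))
          + (∑ j ∈ Finset.Icc 2 N, w j)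
          + ∑ j ∈ Finset.Icc 1 N, (ρ s) ^ j * (M3 * (j:ℝ)^2 / (N:ℝ)^2) := by
      rw [← shift_sum N w, ← Finset.sum_add_distrib, ← Finset.sum_add_distrib]
    have step3 : (∑ j ∈ Finset.Icc 2 N, w j) ≤ ∑ j ∈ Finset.Icc 1 N, w j := by
      apply Finset.sum_le_sum_of_subset_of_nonneg
      · intro j hj
        simp only [Finset.mem_Icc] at hj ⊢; omega
      · intro j hj _
        simp only [Finset.mem_Icc] at hj
        have hyj := hy0 j (Finset.mem_Icc.2 ⟨hj.1, hj.2⟩) s hsT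
        have hxj := hx0 j (Finset.mem_Icc.2 ⟨hj.1, hj.2⟩) s hsT
        have hj1 : (1:ℝ) ≤ (j:ℝ) := by exact_mod_cast hj.1
        rw [hwdef]
        have : (0:ℝ) ≤ (ρ s) ^ (j-1) := pow_nonneg hρ0 _
        have h1 : (0:ℝ) ≤ c2 * y j s := mul_nonneg hc2.le hyj
        have h2 : (0:ℝ) ≤ M2 * ((j:ℝ) - 1) * x j s := by
          apply mul_nonneg (mul_nonneg hM2.le (by linarith)) hxj
        positivity
    have step4 : (∑ j ∈ Finset.Icc 1 N,
          ((j : ℝ) * (ρ s) ^ (j - 1) * (-M2) * x j s + (ρ s) ^ j * (-c1 * y j s)))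
        + ∑ j ∈ Finset.Icc 1 N, w j ≤ 0 := by
      rw [← Finset.sum_add_distrib]
      apply Finset.sum_nonpos
      intro j hj
      have hj' := Finset.mem_Icc.1 hj
      have hX := hx0 j hj s hsT
      have hY := hy0 j hj s hsT
      have hp : (0:ℝ) ≤ (ρ s) ^ (j - 1) := pow_nonneg hρ0 _
      have hcρ : c2 ≤ c1 * ρ s := by
        have h := hρ_lb s hs
        rw [hqdef] at h
        have := (div_le_iff₀ hc1).1 h
        linarith [mul_comm (ρ s) c1]
      have hjj : j - 1 + 1 = j := by omega
      have hpow : (ρ s) ^ j = (ρ s) ^ (j - 1) * ρ s := by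
        conv_lhs => rw [← hjj]
        rw [pow_succ]
      have hcast : ((j:ℝ)) ≥ 1 := by exact_mod_cast hj'.1
      have hexp : (j : ℝ) * (ρ s) ^ (j - 1) * (-M2) * x j s + (ρ s) ^ j * (-c1 * y j s)
            + w j
          = -(M2 * ((ρ s) ^ (j - 1) * x j s))
            - (c1 * ρ s - c2) * ((ρ s) ^ (j - 1) * y j s) := by
        rw [hwdef, hpow]; ring
      rw [hexp]
      have hn1 : 0 ≤ (ρ s) ^ (j - 1) * x j s := mul_nonneg hp hX
      have hn2 : 0 ≤ (ρ s) ^ (j - 1) * y j s := mul_nonneg hp hY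
      nlinarith
    have step5 : ∑ j ∈ Finset.Icc 1 N, (ρ s) ^ j * (M3 * (j:ℝ)^2 / (N:ℝ)^2)
        ≤ 2 * M3 / (N:ℝ)^2 * ((a + M2 * s)⁻¹) ^ 3 := by
      have heq : ∑ j ∈ Finset.Icc 1 N, (ρ s) ^ j * (M3 * (j:ℝ)^2 / (N:ℝ)^2)
          = M3 / (N:ℝ)^2 * ∑ j ∈ Finset.Icc 1 N, (j:ℝ)^2 * (ρ s) ^ j := by
        rw [Finset.mul_sum]
        exact Finset.sum_congr rfl fun j _ => by ring
      rw [heq]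
      have hco : (0:ℝ) ≤ M3 / (N:ℝ)^2 := div_nonneg hM3 hN2.le
      have hb := sq_geom_bound N (ρ s) hρ0 hρ1
      calc M3 / (N:ℝ)^2 * ∑ j ∈ Finset.Icc 1 N, (j:ℝ)^2 * (ρ s) ^ j
          ≤ M3 / (N:ℝ)^2 * (2 * ((1 - ρ s)⁻¹) ^ 3) := mul_le_mul_of_nonneg_left hb hco
        _ = 2 * M3 / (N:ℝ)^2 * ((a + M2 * s)⁻¹) ^ 3 := by
            rw [hone_sub s]; ring
    calc G' s ≤ _ := step1
      _ = _ := step2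
      _ ≤ (∑ j ∈ Finset.Icc 1 N,
            ((j : ℝ) * (ρ s) ^ (j - 1) * (-M2) * x j s + (ρ s) ^ j * (-c1 * y j s)))
          + (∑ j ∈ Finset.Icc 1 N, w j)
          + ∑ j ∈ Finset.Icc 1 N, (ρ s) ^ j * (M3 * (j:ℝ)^2 / (N:ℝ)^2) := by
          linarith [step3]
      _ ≤ 0 + 2 * M3 / (N:ℝ)^2 * ((a + M2 * s)⁻¹) ^ 3 := by linarith [step4, step5]
      _ = 2 * M3 / (N:ℝ)^2 * ((a + M2 * s)⁻¹) ^ 3 := by ring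
  -- comparison function
  set b2 : ℝ := M3 / (M2 * (N:ℝ)^2) with hb2def
  have hb2 : 0 ≤ b2 := div_nonneg hM3 (mul_nonneg hM2.le hN2.le)
  set H : ℝ → ℝ := fun s => G s + b2 * ((a + M2 * s) ^ 2)⁻¹ with hHdef
  set H' : ℝ → ℝ := fun s => G' s
      + b2 * (-((2:ℝ) * (a + M2 * s) ^ 1 * M2) / ((a + M2 * s) ^ 2) ^ 2) with hH'def
  have hHd : ∀ s ∈ Set.Icc (0:ℝ) t, HasDerivAt H (H' s) s := by
    intro s hs
    have hlin : HasDerivAt (fun u : ℝ => a + M2 * u) M2 s := by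
      simpa using ((hasDerivAt_id s).const_mul M2).const_add a
    have hsq := hlin.pow 2
    have hb := hb_pos s hs
    have hinv := hsq.inv (by show (a + M2 * s) ^ 2 ≠ 0; positivity)
    have := (hGd s hs).add (hinv.const_mul b2)
    exact this.congr_deriv (by
      show _ = G' s + b2 * (-((2:ℝ) * (a + M2 * s) ^ 1 * M2) / ((a + M2 * s) ^ 2) ^ 2)
      norm_num)
  have hH'le : ∀ s ∈ Set.Icc (0:ℝ) t, H' s ≤ 0 := by
    intro s hs
    have hb := hb_pos s hs
    have hkey := key s hs
    have heq : b2 * (-((2:ℝ) * (a + M2 * s) ^ 1 * M2) / ((a + M2 * s) ^ 2) ^ 2)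
        = -(2 * M3 / (N:ℝ)^2 * ((a + M2 * s)⁻¹) ^ 3) := by
      rw [hb2def]
      exact heq_aux M2 M3 N (a + M2 * s) hM2.ne' hN0.ne' hb.ne'
    show G' s + b2 * (-((2:ℝ) * (a + M2 * s) ^ 1 * M2) / ((a + M2 * s) ^ 2) ^ 2) ≤ 0
    rw [heq]
    linarith
  have hHt : H t ≤ H 0 := deriv_mono ht0 hHd hH'le
  have hGt : G t ≤ G 0 + b2 * (a ^ 2)⁻¹ := by
    have h1 : H t = G t + b2 * ((a + M2 * t) ^ 2)⁻¹ := rfl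
    have h2 : H 0 = G 0 + b2 * ((a + M2 * 0) ^ 2)⁻¹ := rfl
    have h3 : a + M2 * 0 = a := by ring
    rw [h3] at h2
    have h4 : 0 < a + M2 * t := hb_pos t ⟨ht0, le_refl t⟩
    have h5 : 0 ≤ b2 * ((a + M2 * t) ^ 2)⁻¹ := mul_nonneg hb2 (by positivity)
    rw [h1, h2] at hHt
    linarith
  have hG0 : G 0 ≤ C0 / ((N:ℝ)^2 * a ^ 3) := by
    have h1a : a ≤ 1 := by
      rw [hadef]; nlinarith [mul_nonneg hM2.le ht0]
    have hr : (1 - a) ∈ Set.Ico (0:ℝ) 1 := ⟨by linarith, by linarith⟩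
    have h := hinit (1 - a) hr
    have hrw : 1 - (1 - a) = a := by ring
    rw [hrw] at h
    have hG0eq : G 0 = ∑ j ∈ Finset.Icc 1 N, (1 - a) ^ j * x j 0 := by
      apply Finset.sum_congr rfl
      intro j _
      have hρ0eq : ρ 0 = 1 - a := by
        show q + M2 * (t - 0) = 1 - a
        rw [hadef]; ring
      rw [hρ0eq]
    rw [hG0eq]
    exact h
  -- conclude
  have htmem : t ∈ Set.Icc (0:ℝ) t := ⟨ht0, le_refl t⟩
  have hρt : ρ t = q := by show q + M2 * (t - t) = q; ring
  have hxk : q ^ k * x k t ≤ G t := by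
    have h := Finset.single_le_sum (f := fun j => (ρ t) ^ j * x j t)
      (fun j hj => mul_nonneg (pow_nonneg (hρ_nonneg t htmem) j)
        (hx0 j hj t ⟨ht0, htT.le⟩)) hk
    calc q ^ k * x k t = (ρ t) ^ k * x k t := by rw [hρt]
      _ ≤ ∑ j ∈ Finset.Icc 1 N, (ρ t) ^ j * x j t := by simpa using h
      _ = G t := rfl
  have hGtb : G t ≤ C0 / ((N:ℝ)^2 * a ^ 3) + b2 * (a ^ 2)⁻¹ := by linarith
  have hqk : 0 < q ^ k := pow_pos hq0 k
  have hq_inv : (c1 / c2) ^ k = (q ^ k)⁻¹ := by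
    rw [← inv_pow]
    congr 1
    rw [hqdef, inv_div]
  have hbnd : 0 ≤ C0 / ((N:ℝ)^2 * a ^ 3) + b2 * (a ^ 2)⁻¹ := by positivity
  have hfin : x k t ≤ (c1 / c2) ^ k * (C0 / ((N:ℝ)^2 * a ^ 3) + b2 * (a ^ 2)⁻¹) := by
    rw [hq_inv]
    have h2 : q ^ k * x k t ≤ C0 / ((N:ℝ)^2 * a ^ 3) + b2 * (a ^ 2)⁻¹ := hxk.trans hGtb
    calc x k t = (q ^ k)⁻¹ * (q ^ k * x k t) :=
          (inv_mul_cancel_left₀ hqk.ne' (x k t)).symm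
      _ ≤ (q ^ k)⁻¹ * (C0 / ((N:ℝ)^2 * a ^ 3) + b2 * (a ^ 2)⁻¹) :=
          mul_le_mul_of_nonneg_left h2 (inv_nonneg.2 hqk.le)
  refine hfin.trans (le_of_eq ?_)
  have hae : 1 - M2 * t - q = a := by rw [hadef]; ring
  rw [hae, hb2def]
  exact final_aux ((c1 / c2) ^ k) C0 M2 M3 N a hM2.ne' hN0.ne' ha.ne'
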